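/- Let n ∈ ℕ, let A be a compact metric space, let S : ℝⁿ × A × ℝ → ℝⁿ be continuous, and fix t₀, t ∈ ℕ. Let b₁, b₂ ∈ ℝⁿ, let ν₀ be a Borel probability measure on ℝ with finite first moment, and let ρ ≥ 0. Suppose x_k → x₀ in ℝⁿ, a_k → a₀ in A, and f_k, f₀, F_k, F₀ are Borel probability measures on ℝ with finite first moment satisfying W₁(f_k, f₀) → 0 and W₁(F_k, F₀) → 0. Then limsup_{k} F_k( { z ∈ ℝ : S(x_k, a_k, z) ∈ [b₁, b₂] and W₁(R(t, f_k, z), ν₀) ≤ ρ } ) ≤ F₀( { z ∈ ℝ : S(x₀, a₀, z) ∈ [b₁, b₂] and W₁(R(t, f₀, z), ν₀) ≤ ρ } ), where [b₁, b₂] denotes the product of coordinate intervals ∏ᵢ [b₁⁽ⁱ⁾, b₂⁽ⁱ⁾]. -/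

import Mathlib

open MeasureTheory Filter Topology
open scoped ENNReal

/-- Wasserstein-1 distance via the Kantorovich–Rubinstein dual formula, taking the
supremum over bounded 1-Lipschitz test functions. -/
noncomputable def W1 (μ ν : Measure ℝ) : ℝ :=
  sSup {d : ℝ | ∃ f : ℝ → ℝ, LipschitzWith 1 f ∧ (∃ C, ∀ x, |f x| ≤ C) ∧
    d = (∫ x, f x ∂μ) - ∫ x, f x ∂ν}

/-- The empirical-distribution update map
`R(t,F,z) = ((t₀+t)/(t₀+t+1))·F + (1/(t₀+t+1))·δ_z`. -/
noncomputable def Rupd (t₀ t : ℕ) (F : Measure ℝ) (z : ℝ) : Measure ℝ :=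
  (((t₀ : ℝ≥0∞) + t) / ((t₀ : ℝ≥0∞) + t + 1)) • F +
    (1 / ((t₀ : ℝ≥0∞) + t + 1)) • Measure.dirac z
namespace W1aux

def W1s (μ ν : Measure ℝ) : Set ℝ :=
  {d : ℝ | ∃ f : ℝ → ℝ, LipschitzWith 1 f ∧ (∃ C, ∀ x, |f x| ≤ C) ∧
    d = (∫ x, f x ∂μ) - ∫ x, f x ∂ν}

lemma W1_eq_sSup (μ ν : Measure ℝ) : W1 μ ν = sSup (W1s μ ν) := rfl

lemma zero_mem_W1s (μ ν : Measure ℝ) : (0:ℝ) ∈ W1s μ ν :=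
  ⟨fun _ => 0, (LipschitzWith.const 0).weaken zero_le_one, ⟨0, fun _ => by simp⟩, by simp⟩

lemma W1s_nonempty (μ ν : Measure ℝ) : (W1s μ ν).Nonempty := ⟨0, zero_mem_W1s μ ν⟩

lemma integrable_of_bdd {f : ℝ → ℝ} (hc : Continuous f) {C : ℝ} (hb : ∀ x, |f x| ≤ C)
    (μ : Measure ℝ) [IsFiniteMeasure μ] : Integrable f μ :=
  ⟨hc.aestronglyMeasurable,
    MeasureTheory.HasFiniteIntegral.of_bounded (C := C)
      (ae_of_all _ fun x => by simpa [Real.norm_eq_abs] using hb x)⟩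

lemma W1s_bddAbove (μ ν : Measure ℝ) [IsProbabilityMeasure μ] [IsProbabilityMeasure ν]
    (hμ : Integrable id μ) (hν : Integrable id ν) : BddAbove (W1s μ ν) := by
  refine ⟨(∫ x, |x| ∂μ) + ∫ x, |x| ∂ν, ?_⟩
  rintro d ⟨f, hf, ⟨C, hC⟩, rfl⟩
  have hfc : Continuous f := hf.continuous
  have hintμ : Integrable f μ := integrable_of_bdd hfc hC μ
  have hintν : Integrable f ν := integrable_of_bdd hfc hC ν
  have habs : ∀ x : ℝ, |f x - f 0| ≤ |x| := fun x => by
    have := hf.dist_le_mul x 0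
    simpa [Real.dist_eq] using this
  have key : ∀ (κ : Measure ℝ) [IsProbabilityMeasure κ], Integrable f κ → Integrable id κ →
      |(∫ x, f x ∂κ) - f 0| ≤ ∫ x, |x| ∂κ := by
    intro κ _ hint hid
    have h1 : (∫ x, f x ∂κ) - f 0 = ∫ x, f x - f 0 ∂κ := by
      rw [integral_sub hint (integrable_const _), integral_const]
      simp
    rw [h1]
    calc |∫ x, f x - f 0 ∂κ| ≤ ∫ x, |f x - f 0| ∂κ := by
          simpa [Real.norm_eq_abs] using norm_integral_le_integral_norm (μ := κ) (f := fun x => f x - f 0)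
      _ ≤ ∫ x, |x| ∂κ := integral_mono (hint.sub (integrable_const _)).abs hid.abs habs
  have h2 := key μ hintμ hμ
  have h3 := key ν hintν hν
  have : (∫ x, f x ∂μ) - ∫ x, f x ∂ν
      = ((∫ x, f x ∂μ) - f 0) - ((∫ x, f x ∂ν) - f 0) := by ring
  rw [this]
  have := abs_le.1 h2
  have := abs_le.1 h3
  linarith [(abs_le.1 h2).2, (abs_le.1 h3).1]

lemma le_W1 {μ ν : Measure ℝ} (hbdd : BddAbove (W1s μ ν)) {f : ℝ → ℝ}
    (hf : LipschitzWith 1 f) (hb : ∃ C, ∀ x, |f x| ≤ C) :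
    (∫ x, f x ∂μ) - ∫ x, f x ∂ν ≤ W1 μ ν :=
  le_csSup hbdd ⟨f, hf, hb, rfl⟩

lemma W1_nonneg {μ ν : Measure ℝ} (hbdd : BddAbove (W1s μ ν)) : 0 ≤ W1 μ ν :=
  le_csSup hbdd (zero_mem_W1s μ ν)

lemma W1_le {μ ν : Measure ℝ} {r : ℝ}
    (h : ∀ f : ℝ → ℝ, LipschitzWith 1 f → (∃ C, ∀ x, |f x| ≤ C) →
      (∫ x, f x ∂μ) - ∫ x, f x ∂ν ≤ r) : W1 μ ν ≤ r := by
  refine csSup_le (W1s_nonempty μ ν) ?_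
  rintro d ⟨f, hf, hb, rfl⟩
  exact h f hf hb


lemma den_ne_zero (t₀ t : ℕ) : ((t₀ : ℝ≥0∞) + t + 1) ≠ 0 := by simp
lemma den_ne_top (t₀ t : ℕ) : ((t₀ : ℝ≥0∞) + t + 1) ≠ ⊤ := by
  simp [ENNReal.add_ne_top]

lemma Rupd_prob (t₀ t : ℕ) (μ : Measure ℝ) [IsProbabilityMeasure μ] (z : ℝ) :
    IsProbabilityMeasure (Rupd t₀ t μ z) := by
  constructor
  simp only [Rupd, Measure.add_apply, Measure.smul_apply, measure_univ, smul_eq_mul, mul_one]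
  rw [ENNReal.div_add_div_same]
  exact ENNReal.div_self (den_ne_zero t₀ t) (den_ne_top t₀ t)

lemma coef_toReal (t₀ t : ℕ) :
    ((((t₀ : ℝ≥0∞) + t) / ((t₀ : ℝ≥0∞) + t + 1))).toReal = ((t₀ : ℝ) + t) / ((t₀ : ℝ) + t + 1) := by
  rw [ENNReal.toReal_div]
  norm_num [ENNReal.toReal_add]

lemma coef2_toReal (t₀ t : ℕ) :
    ((1 : ℝ≥0∞) / ((t₀ : ℝ≥0∞) + t + 1)).toReal = 1 / ((t₀ : ℝ) + t + 1) := by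
  rw [ENNReal.toReal_div]
  norm_num [ENNReal.toReal_add]

lemma integrable_Rupd {f : ℝ → ℝ} (hc : Continuous f) {C : ℝ} (hb : ∀ x, |f x| ≤ C)
    (t₀ t : ℕ) (μ : Measure ℝ) [IsProbabilityMeasure μ] (z : ℝ) :
    Integrable f (Rupd t₀ t μ z) := by
  haveI := Rupd_prob t₀ t μ z
  exact ⟨hc.aestronglyMeasurable,
    MeasureTheory.HasFiniteIntegral.of_bounded (C := C)
      (ae_of_all _ fun x => by simpa [Real.norm_eq_abs] using hb x)⟩

lemma integral_Rupd {f : ℝ → ℝ} (hc : Continuous f) {C : ℝ} (hb : ∀ x, |f x| ≤ C)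
    (t₀ t : ℕ) (μ : Measure ℝ) [IsProbabilityMeasure μ] (z : ℝ) :
    ∫ x, f x ∂(Rupd t₀ t μ z)
      = (((t₀:ℝ) + t) / ((t₀:ℝ) + t + 1)) * ∫ x, f x ∂μ
        + (1 / ((t₀:ℝ) + t + 1)) * f z := by
  have hint : Integrable f μ :=
    ⟨hc.aestronglyMeasurable, MeasureTheory.HasFiniteIntegral.of_bounded (C := C)
      (ae_of_all _ fun x => by simpa [Real.norm_eq_abs] using hb x)⟩
  have hintd : Integrable f (Measure.dirac z) :=
    ⟨hc.aestronglyMeasurable, MeasureTheory.HasFiniteIntegral.of_bounded (C := C)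
      (ae_of_all _ fun x => by simpa [Real.norm_eq_abs] using hb x)⟩
  rw [Rupd, integral_add_measure (hint.smul_measure (by
        exact (ENNReal.div_lt_top (by simp [ENNReal.add_ne_top]) (den_ne_zero t₀ t)).ne))
      (hintd.smul_measure (by
        exact (ENNReal.div_lt_top (by simp) (den_ne_zero t₀ t)).ne)),
    integral_smul_measure, integral_smul_measure, integral_dirac,
    coef_toReal, coef2_toReal]
  simp [smul_eq_mul]

lemma integrable_id_Rupd (t₀ t : ℕ) (μ : Measure ℝ) [IsProbabilityMeasure μ]
    (hμ : Integrable id μ) (z : ℝ) : Integrable id (Rupd t₀ t μ z) := by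
  refine Integrable.add_measure ?_ ?_
  · exact hμ.smul_measure ((ENNReal.div_lt_top (by simp [ENNReal.add_ne_top]) (den_ne_zero t₀ t)).ne)
  · have h1 : Integrable id (Measure.dirac z) := by
      refine (integrable_const z).congr ?_
      exact (MeasureTheory.ae_eq_dirac (id : ℝ → ℝ)).symm
    exact h1.smul_measure ((ENNReal.div_lt_top (by simp) (den_ne_zero t₀ t)).ne)


section keys
variable (t₀ t : ℕ) (ν₀ : Measure ℝ) [IsProbabilityMeasure ν₀]

/-- abbreviations for the real coefficients -/
noncomputable def cc (t₀ t : ℕ) : ℝ := ((t₀:ℝ) + t) / ((t₀:ℝ) + t + 1)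
noncomputable def dd (t₀ t : ℕ) : ℝ := 1 / ((t₀:ℝ) + t + 1)

lemma den_pos (t₀ t : ℕ) : (0:ℝ) < (t₀:ℝ) + t + 1 := by positivity
lemma cc_nonneg (t₀ t : ℕ) : 0 ≤ cc t₀ t := by
  unfold cc; positivity
lemma cc_le_one (t₀ t : ℕ) : cc t₀ t ≤ 1 := by
  unfold cc
  rw [div_le_one (den_pos t₀ t)]; linarith
lemma dd_pos (t₀ t : ℕ) : 0 < dd t₀ t := by
  unfold dd; positivity
lemma dd_le_one (t₀ t : ℕ) : dd t₀ t ≤ 1 := by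
  unfold dd
  rw [div_le_one (den_pos t₀ t)]; linarith

/-- key1 : moving the measure argument -/
lemma W1_Rupd_le_measure (hν₀ : Integrable id ν₀) (μ μ' : Measure ℝ) [IsProbabilityMeasure μ] [IsProbabilityMeasure μ']
    (hμ : Integrable id μ) (hμ' : Integrable id μ') (z : ℝ) :
    W1 (Rupd t₀ t μ z) ν₀ ≤ W1 (Rupd t₀ t μ' z) ν₀ + cc t₀ t * W1 μ' μ := by
  haveI := Rupd_prob t₀ t μ z
  haveI := Rupd_prob t₀ t μ' z
  refine W1_le ?_
  intro f hf hb
  obtain ⟨C, hC⟩ := hb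
  have hfc := hf.continuous
  have h1 := integral_Rupd hfc hC t₀ t μ z
  have h2 := integral_Rupd hfc hC t₀ t μ' z
  have hneg : LipschitzWith 1 (fun x => -f x) := hf.neg
  have hd : (∫ x, f x ∂μ) - ∫ x, f x ∂μ' ≤ W1 μ' μ := by
    have := le_W1 (W1s_bddAbove μ' μ hμ' hμ) hneg ⟨C, fun x => by simpa [abs_neg] using hC x⟩
    simp only [integral_neg] at this
    linarith
  have h3 : (∫ x, f x ∂(Rupd t₀ t μ' z)) - ∫ x, f x ∂ν₀ ≤ W1 (Rupd t₀ t μ' z) ν₀ :=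
    le_W1 (W1s_bddAbove _ _ (integrable_id_Rupd t₀ t μ' hμ' z) hν₀) hf ⟨C, hC⟩
  have hc0 := cc_nonneg t₀ t
  have : cc t₀ t * ((∫ x, f x ∂μ) - ∫ x, f x ∂μ') ≤ cc t₀ t * W1 μ' μ :=
    mul_le_mul_of_nonneg_left hd hc0
  have hexp : (∫ x, f x ∂(Rupd t₀ t μ z)) - ∫ x, f x ∂ν₀
      = cc t₀ t * ((∫ x, f x ∂μ) - ∫ x, f x ∂μ')
        + ((∫ x, f x ∂(Rupd t₀ t μ' z)) - ∫ x, f x ∂ν₀) := by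
    rw [h1, h2]; simp only [cc, dd]; ring
  linarith

/-- key2 : moving the point argument -/
lemma W1_Rupd_le_point (hν₀ : Integrable id ν₀) (μ : Measure ℝ) [IsProbabilityMeasure μ]
    (hμ : Integrable id μ) (z z' : ℝ) :
    W1 (Rupd t₀ t μ z) ν₀ ≤ W1 (Rupd t₀ t μ z') ν₀ + dd t₀ t * |z - z'| := by
  haveI := Rupd_prob t₀ t μ z
  haveI := Rupd_prob t₀ t μ z'
  refine W1_le ?_
  intro f hf hb
  obtain ⟨C, hC⟩ := hb
  have hfc := hf.continuous
  have h1 := integral_Rupd hfc hC t₀ t μ z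
  have h2 := integral_Rupd hfc hC t₀ t μ z'
  have h3 : (∫ x, f x ∂(Rupd t₀ t μ z')) - ∫ x, f x ∂ν₀ ≤ W1 (Rupd t₀ t μ z') ν₀ :=
    le_W1 (W1s_bddAbove _ _ (integrable_id_Rupd t₀ t μ hμ z') hν₀) hf ⟨C, hC⟩
  have hfz : f z - f z' ≤ |z - z'| := by
    have := hf.dist_le_mul z z'
    rw [Real.dist_eq, Real.dist_eq] at this
    calc f z - f z' ≤ |f z - f z'| := le_abs_self _
      _ ≤ |z - z'| := by simpa using this
  have hd0 := (dd_pos t₀ t).le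
  have hexp : (∫ x, f x ∂(Rupd t₀ t μ z)) - ∫ x, f x ∂ν₀
      = dd t₀ t * (f z - f z')
        + ((∫ x, f x ∂(Rupd t₀ t μ z')) - ∫ x, f x ∂ν₀) := by
    rw [h1, h2]; simp only [cc, dd]; ring
  nlinarith [mul_le_mul_of_nonneg_left hfz hd0]

lemma lipschitz_W1_Rupd (hν₀ : Integrable id ν₀) (μ : Measure ℝ) [IsProbabilityMeasure μ] (hμ : Integrable id μ) :
    LipschitzWith 1 (fun z => W1 (Rupd t₀ t μ z) ν₀) := by
  apply LipschitzWith.of_dist_le_mul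
  intro z z'
  rw [Real.dist_eq, Real.dist_eq]
  simp only [NNReal.coe_one, one_mul]
  have h1 := W1_Rupd_le_point t₀ t ν₀ hν₀ μ hμ z z'
  have h2 := W1_Rupd_le_point t₀ t ν₀ hν₀ μ hμ z' z
  have hd1 := dd_le_one t₀ t
  have hd0 := (dd_pos t₀ t).le
  have ha : |z - z'| = |z' - z| := abs_sub_comm _ _
  rw [abs_le]
  constructor <;> nlinarith [abs_nonneg (z - z'), mul_le_mul_of_nonneg_right hd1 (abs_nonneg (z - z'))]

lemma lipAbs : LipschitzWith 1 (fun x : ℝ => |x|) := by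
  apply LipschitzWith.of_dist_le_mul
  intro x y
  rw [Real.dist_eq, Real.dist_eq]
  simpa using abs_abs_sub_abs_le_abs_sub x y

/-- boundedness of admissible points -/
lemma z_bound (hν₀ : Integrable id ν₀) (μ : Measure ℝ) [IsProbabilityMeasure μ] (hμ : Integrable id μ)
    {ρ z : ℝ} (hW : W1 (Rupd t₀ t μ z) ν₀ ≤ ρ) :
    |z| ≤ ((t₀:ℝ) + t + 1) * (ρ + ∫ x, |x| ∂ν₀) := by
  haveI := Rupd_prob t₀ t μ z
  set f : ℝ → ℝ := fun x => min |x| |z| with hfdef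
  have hf : LipschitzWith 1 f := lipAbs.min_const _
  have hfb : ∀ x, |f x| ≤ |z| := by
    intro x
    rw [abs_of_nonneg (le_min (abs_nonneg x) (abs_nonneg z))]
    exact min_le_right _ _
  have hint := integral_Rupd hf.continuous hfb t₀ t μ z
  have hfz : f z = |z| := min_self _
  have hμint : 0 ≤ ∫ x, f x ∂μ :=
    integral_nonneg fun x => le_min (abs_nonneg x) (abs_nonneg z)
  have hν : ∫ x, f x ∂ν₀ ≤ ∫ x, |x| ∂ν₀ :=
    integral_mono (integrable_of_bdd hf.continuous hfb ν₀) hν₀.abs fun x => min_le_left _ _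
  have hle : (∫ x, f x ∂(Rupd t₀ t μ z)) - ∫ x, f x ∂ν₀ ≤ W1 (Rupd t₀ t μ z) ν₀ :=
    le_W1 (W1s_bddAbove _ _ (integrable_id_Rupd t₀ t μ hμ z) hν₀) hf ⟨|z|, hfb⟩
  have hc0 := cc_nonneg t₀ t
  have hkey : (1 / ((t₀:ℝ) + t + 1)) * |z| ≤ ρ + ∫ x, |x| ∂ν₀ := by
    rw [hint, hfz] at hle
    have : (((t₀:ℝ) + t) / ((t₀:ℝ) + t + 1)) * ∫ x, f x ∂μ ≥ 0 := by
      apply mul_nonneg _ hμint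
      unfold cc at hc0; exact hc0
    linarith
  have hden := den_pos t₀ t
  rw [div_mul_eq_mul_div, one_mul, div_le_iff₀ hden] at hkey
  calc |z| ≤ (ρ + ∫ x, |x| ∂ν₀) * ((t₀:ℝ) + t + 1) := hkey
    _ = ((t₀:ℝ) + t + 1) * (ρ + ∫ x, |x| ∂ν₀) := mul_comm _ _

end keys
end W1aux

open W1aux in
theorem kernel_upper_semicontinuous (n : ℕ) {A : Type*} [MetricSpace A] [CompactSpace A]
    (S : (Fin n → ℝ) × A × ℝ → Fin n → ℝ) (hS : Continuous S)
    (t₀ t : ℕ) (b₁ b₂ : Fin n → ℝ)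
    (ν₀ : Measure ℝ) [IsProbabilityMeasure ν₀] (hν₀ : Integrable id ν₀)
    (ρ : ℝ) (hρ : 0 ≤ ρ)
    (xk : ℕ → Fin n → ℝ) (x0 : Fin n → ℝ) (hx : Tendsto xk atTop (nhds x0))
    (ak : ℕ → A) (a0 : A) (ha : Tendsto ak atTop (nhds a0))
    (fk : ℕ → Measure ℝ) (f0 : Measure ℝ)
    [∀ k, IsProbabilityMeasure (fk k)] [IsProbabilityMeasure f0]
    (hfk : ∀ k, Integrable id (fk k)) (hf0 : Integrable id f0)
    (Fk : ℕ → Measure ℝ) (F0 : Measure ℝ)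
    [∀ k, IsProbabilityMeasure (Fk k)] [IsProbabilityMeasure F0]
    (hFk : ∀ k, Integrable id (Fk k)) (hF0 : Integrable id F0)
    (hf : Tendsto (fun k => W1 (fk k) f0) atTop (nhds 0))
    (hF : Tendsto (fun k => W1 (Fk k) F0) atTop (nhds 0)) :
    limsup (fun k =>
        (Fk k {z : ℝ | S (xk k, ak k, z) ∈ Set.Icc b₁ b₂ ∧
          W1 (Rupd t₀ t (fk k) z) ν₀ ≤ ρ}).toReal) atTop ≤
      (F0 {z : ℝ | S (x0, a0, z) ∈ Set.Icc b₁ b₂ ∧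
        W1 (Rupd t₀ t f0 z) ν₀ ≤ ρ}).toReal := by
  classical
  set W : ℝ → ℝ := fun z => W1 (Rupd t₀ t f0 z) ν₀ with hWdef
  have hWlip : LipschitzWith 1 W := lipschitz_W1_Rupd t₀ t ν₀ hν₀ f0 hf0
  set B : ℝ := ∫ x, |x| ∂ν₀ with hB
  set M₀ : ℝ := ((t₀:ℝ) + t + 1) * (ρ + B) with hM
  set C : ℕ → Set ℝ := fun k => {z : ℝ | S (xk k, ak k, z) ∈ Set.Icc b₁ b₂ ∧
      W1 (Rupd t₀ t (fk k) z) ν₀ ≤ ρ} with hCdef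
  set C0 : Set ℝ := {z : ℝ | S (x0, a0, z) ∈ Set.Icc b₁ b₂ ∧ W z ≤ ρ} with hC0def
  set E : ℝ → Set ℝ := fun ε => {z : ℝ |
      S (x0, a0, z) ∈ Set.Icc (fun i => b₁ i - ε) (fun i => b₂ i + ε) ∧ W z ≤ ρ + ε} with hEdef
  have hScont : Continuous (fun z : ℝ => S (x0, a0, z)) :=
    hS.comp (continuous_const.prodMk (continuous_const.prodMk continuous_id))
  have hEclosed : ∀ ε : ℝ, IsClosed (E ε) := by
    intro ε
    have h1 : IsClosed {z : ℝ |
        S (x0, a0, z) ∈ Set.Icc (fun i => b₁ i - ε) (fun i => b₂ i + ε)} :=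
      IsClosed.preimage hScont isClosed_Icc
    have h2 : IsClosed {z : ℝ | W z ≤ ρ + ε} := isClosed_le hWlip.continuous continuous_const
    exact h1.inter h2
  have hEmono : ∀ {ε ε' : ℝ}, ε ≤ ε' → E ε ⊆ E ε' := by
    intro ε ε' hεε z hz
    obtain ⟨hz1, hz2⟩ := hz
    rw [Set.mem_Icc] at hz1
    refine ⟨Set.mem_Icc.mpr ⟨?_, ?_⟩, by linarith⟩
    · intro i; have := hz1.1 i; simp only at this ⊢; linarith
    · intro i; have := hz1.2 i; simp only at this ⊢; linarith
  -- uniform continuity of S near (x0, a0) on the relevant compact set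
  have hevS : ∀ ε > (0:ℝ), ∀ᶠ k in atTop, ∀ z : ℝ, |z| ≤ M₀ →
      dist (S (xk k, ak k, z)) (S (x0, a0, z)) < ε := by
    intro ε hε
    set K : Set ((Fin n → ℝ) × A × ℝ) :=
      Metric.closedBall x0 1 ×ˢ ((Set.univ : Set A) ×ˢ Metric.closedBall (0:ℝ) M₀) with hK
    have hKc : IsCompact K :=
      (isCompact_closedBall _ _).prod (isCompact_univ.prod (isCompact_closedBall _ _))
    have hu := hKc.uniformContinuousOn_of_continuous hS.continuousOn
    rw [Metric.uniformContinuousOn_iff] at hu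
    obtain ⟨δ, hδpos, hδ⟩ := hu ε hε
    have hx' : ∀ᶠ k in atTop, dist (xk k) x0 < min δ 1 :=
      Metric.tendsto_nhds.mp hx _ (lt_min hδpos one_pos)
    have ha' : ∀ᶠ k in atTop, dist (ak k) a0 < δ := Metric.tendsto_nhds.mp ha δ hδpos
    filter_upwards [hx', ha'] with k hk1 hk2 z hz
    have hm1 : (xk k, ak k, z) ∈ K := by
      refine ⟨Metric.mem_closedBall.mpr (le_of_lt (lt_of_lt_of_le hk1 (min_le_right _ _))),
        Set.mem_univ _, Metric.mem_closedBall.mpr ?_⟩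
      rw [Real.dist_0_eq_abs]; exact hz
    have hm2 : (x0, a0, z) ∈ K := by
      refine ⟨Metric.mem_closedBall_self zero_le_one, Set.mem_univ _,
        Metric.mem_closedBall.mpr ?_⟩
      rw [Real.dist_0_eq_abs]; exact hz
    apply hδ _ hm1 _ hm2
    have hdist : dist ((xk k, ak k, z) : (Fin n → ℝ) × A × ℝ) (x0, a0, z)
        = max (dist (xk k) x0) (max (dist (ak k) a0) (dist z z)) := by
      rw [Prod.dist_eq, Prod.dist_eq]
    rw [hdist, dist_self]
    exact max_lt (lt_of_lt_of_le hk1 (min_le_left _ _)) (max_lt hk2 hδpos)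
  -- Claim A : eventual inclusion C k ⊆ E ε
  have claimA : ∀ ε > (0:ℝ), ∀ᶠ k in atTop, C k ⊆ E ε := by
    intro ε hε
    have hev1 : ∀ᶠ k in atTop, |W1 (fk k) f0| < ε := by
      have := Metric.tendsto_nhds.mp hf ε hε
      simpa [Real.dist_0_eq_abs] using this
    filter_upwards [hev1, hevS ε hε] with k h1 h2 z hz
    obtain ⟨hzS, hzW⟩ := hz
    have hzb : |z| ≤ M₀ := z_bound t₀ t ν₀ hν₀ (fk k) (hfk k) hzW
    have hd := h2 z hzb
    constructor
    · rw [Set.mem_Icc] at hzS ⊢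
      have hcoord : ∀ i, |S (x0, a0, z) i - S (xk k, ak k, z) i| ≤ ε := by
        intro i
        have h3 : dist (S (x0, a0, z) i) (S (xk k, ak k, z) i)
            ≤ dist (S (x0, a0, z)) (S (xk k, ak k, z)) := dist_le_pi_dist _ _ i
        rw [dist_comm (S (x0, a0, z))] at h3
        have := h3.trans hd.le
        rwa [Real.dist_eq] at this
      constructor
      · intro i
        have h4 := (abs_le.1 (hcoord i)).1
        have h5 := hzS.1 i
        simp only at h5 ⊢; linarith
      · intro i
        have h4 := (abs_le.1 (hcoord i)).2
        have h5 := hzS.2 i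
        simp only at h5 ⊢; linarith
    · have hkey := W1_Rupd_le_measure t₀ t ν₀ hν₀ f0 (fk k) hf0 (hfk k) z
      have hc0 := cc_nonneg t₀ t
      have hc1 := cc_le_one t₀ t
      have habs : W1 (fk k) f0 ≤ |W1 (fk k) f0| := le_abs_self _
      have : cc t₀ t * W1 (fk k) f0 ≤ ε := by nlinarith [abs_nonneg (W1 (fk k) f0)]
      show W z ≤ ρ + ε
      linarith
  -- Case : some E ε is empty
  by_cases hcase : ∃ ε > (0:ℝ), E ε = ∅
  · obtain ⟨ε, hε, hEe⟩ := hcase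
    have hev0 : ∀ᶠ k in atTop, (Fk k (C k)).toReal = (0:ℝ) := by
      filter_upwards [claimA ε hε] with k hk
      rw [hEe, Set.subset_empty_iff] at hk
      simp [hk]
    have hlim : limsup (fun k => (Fk k (C k)).toReal) atTop = 0 := by
      rw [limsup_congr hev0, limsup_const]
    rw [hlim]
    exact ENNReal.toReal_nonneg
  · push_neg at hcase
    set εm : ℕ → ℝ := fun m => 1 / (m + 1 : ℝ) with hεmdef
    have hεm_pos : ∀ m : ℕ, 0 < εm m := fun m => by positivity
    have hεm_tendsto : Tendsto εm atTop (𝓝 0) := tendsto_one_div_add_atTop_nhds_zero_nat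
    have hεm_anti : Antitone εm := by
      intro m m' hmm'
      apply one_div_le_one_div_of_le (by positivity)
      have : (m:ℝ) ≤ m' := Nat.cast_le.mpr hmm'
      linarith
    have hEne : ∀ m : ℕ, (E (εm m)).Nonempty := fun m => hcase _ (hεm_pos m)
    set D : ℕ → Set ℝ := fun m => {z : ℝ | Metric.infDist z (E (εm m)) ≤ εm m} with hDdef
    have hDclosed : ∀ m, IsClosed (D m) :=
      fun m => isClosed_le (Metric.continuous_infDist_pt _) continuous_const
    have hDanti : Antitone D := by
      intro m m' hmm' z hz
      have h1 : εm m' ≤ εm m := hεm_anti hmm'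
      have h2 : E (εm m') ⊆ E (εm m) := hEmono h1
      have h3 : Metric.infDist z (E (εm m)) ≤ Metric.infDist z (E (εm m')) :=
        Metric.infDist_le_infDist_of_subset h2 (hEne m')
      exact le_trans h3 (le_trans hz h1)
    -- main claim : limsup ≤ (F0 (D m)).toReal for every m
    have claimM : ∀ m : ℕ,
        limsup (fun k => (Fk k (C k)).toReal) atTop ≤ (F0 (D m)).toReal := by
      intro m
      set ε : ℝ := εm m with hεdef
      have hε : 0 < ε := hεm_pos m
      set Eε : Set ℝ := E (εm m) with hEεdef
      set g : ℝ → ℝ := fun z => 1 - min (Metric.infDist z Eε / ε) 1 with hgdef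
      set gh : ℝ → ℝ := fun z => ε - min (Metric.infDist z Eε) ε with hghdef
      have hgh : ∀ z, g z = gh z / ε := by
        intro z
        simp only [hgdef, hghdef]
        rw [sub_div, div_self hε.ne', ← min_div_div_right hε.le]
        rw [div_self hε.ne']
      have hmin_lip : LipschitzWith 1 (fun z => min (Metric.infDist z Eε) ε) :=
        (Metric.lipschitz_infDist_pt Eε).min_const ε
      have hgh_lip : LipschitzWith 1 gh := by
        apply LipschitzWith.of_dist_le_mul
        intro z z'
        have := hmin_lip.dist_le_mul z z'
        simp only [NNReal.coe_one, one_mul] at this ⊢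
        rw [Real.dist_eq] at this ⊢
        simp only [hghdef]
        rw [show ε - min (Metric.infDist z Eε) ε - (ε - min (Metric.infDist z' Eε) ε)
          = -(min (Metric.infDist z Eε) ε - min (Metric.infDist z' Eε) ε) by ring, abs_neg]
        exact this
      have hgh_bdd : ∀ z, |gh z| ≤ ε := by
        intro z
        have h1 : 0 ≤ min (Metric.infDist z Eε) ε :=
          le_min (Metric.infDist_nonneg) hε.le
        have h2 : min (Metric.infDist z Eε) ε ≤ ε := min_le_right _ _
        rw [abs_le]; constructor <;> simp only [hghdef] <;> linarith
      have hg_cont : Continuous g := by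
        simp only [hgdef]
        exact continuous_const.sub (((Metric.continuous_infDist_pt Eε).div_const ε).min
          continuous_const)
      have hg_nonneg : ∀ z, 0 ≤ g z := by
        intro z
        simp only [hgdef]
        have : min (Metric.infDist z Eε / ε) 1 ≤ 1 := min_le_right _ _
        linarith
      have hg_le_one : ∀ z, g z ≤ 1 := by
        intro z
        simp only [hgdef]
        have : 0 ≤ min (Metric.infDist z Eε / ε) 1 :=
          le_min (div_nonneg Metric.infDist_nonneg hε.le) zero_le_one
        linarith
      have hg_bdd : ∀ z, |g z| ≤ 1 := fun z =>
        abs_le.mpr ⟨by linarith [hg_nonneg z], hg_le_one z⟩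
      have hg_one : ∀ z ∈ Eε, g z = 1 := by
        intro z hz
        simp only [hgdef]
        rw [Metric.infDist_zero_of_mem hz]
        norm_num
      have hg_zero : ∀ z, z ∉ D m → g z = 0 := by
        intro z hz
        simp only [hDdef, Set.mem_setOf_eq, not_le] at hz
        simp only [hgdef]
        have h1 : (1:ℝ) ≤ Metric.infDist z Eε / ε := by
          rw [le_div_iff₀ hε]; rw [one_mul]; exact hz.le
        rw [min_eq_right h1]
        ring
      have hEmeas : MeasurableSet Eε := (hEclosed _).measurableSet
      have hDmeas : MeasurableSet (D m) := (hDclosed m).measurableSet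
      have hg_int : ∀ (κ : Measure ℝ) [IsProbabilityMeasure κ], Integrable g κ :=
        fun κ _ => integrable_of_bdd hg_cont hg_bdd κ
      -- eventual bound
      have hstep : ∀ᶠ k in atTop, (Fk k (C k)).toReal
          ≤ (∫ z, g z ∂F0) + (1/ε) * W1 (Fk k) F0 := by
        filter_upwards [claimA ε hε] with k hk
        have h1 : (Fk k (C k)).toReal ≤ (Fk k Eε).toReal :=
          ENNReal.toReal_mono (measure_ne_top _ _) (measure_mono hk)
        have h2 : (Fk k Eε).toReal = ∫ z, Eε.indicator (fun _ => (1:ℝ)) z ∂(Fk k) := by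
          rw [integral_indicator_const (1:ℝ) hEmeas]; simp [measureReal_def]
        have h3 : ∫ z, Eε.indicator (fun _ => (1:ℝ)) z ∂(Fk k) ≤ ∫ z, g z ∂(Fk k) := by
          apply integral_mono ((integrable_const (1:ℝ)).indicator hEmeas) (hg_int _)
          intro z
          by_cases hzE : z ∈ Eε
          · rw [Set.indicator_of_mem hzE, hg_one z hzE]
          · rw [Set.indicator_of_notMem hzE]; exact hg_nonneg z
        have h4 : ∫ z, g z ∂(Fk k) ≤ (∫ z, g z ∂F0) + (1/ε) * W1 (Fk k) F0 := by
          have h5 : (∫ z, gh z ∂(Fk k)) - ∫ z, gh z ∂F0 ≤ W1 (Fk k) F0 :=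
            le_W1 (W1s_bddAbove _ _ (hFk k) hF0) hgh_lip ⟨ε, hgh_bdd⟩
          have h6 : ∫ z, g z ∂(Fk k) = (∫ z, gh z ∂(Fk k)) / ε := by
            simp only [hgh]; rw [integral_div]
          have h7 : ∫ z, g z ∂F0 = (∫ z, gh z ∂F0) / ε := by
            simp only [hgh]; rw [integral_div]
          rw [h6, h7]
          rw [div_le_iff₀ hε] at *
          have := mul_le_mul_of_nonneg_right h5 (le_of_lt hε)
          field_simp
          linarith
        linarith
      -- pass to the limit
      have hcob : IsCoboundedUnder (· ≤ ·) atTop (fun k => (Fk k (C k)).toReal) :=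
        isCoboundedUnder_le_of_le atTop (fun k => ENNReal.toReal_nonneg)
      have htend : Tendsto (fun k => (∫ z, g z ∂F0) + (1/ε) * W1 (Fk k) F0) atTop
          (𝓝 ((∫ z, g z ∂F0) + (1/ε) * 0)) :=
        tendsto_const_nhds.add (hF.const_mul _)
      have hbd : IsBoundedUnder (· ≤ ·) atTop
          (fun k => (∫ z, g z ∂F0) + (1/ε) * W1 (Fk k) F0) :=
        htend.isBoundedUnder_le
      have hlim1 : limsup (fun k => (Fk k (C k)).toReal) atTop
          ≤ limsup (fun k => (∫ z, g z ∂F0) + (1/ε) * W1 (Fk k) F0) atTop :=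
        limsup_le_limsup hstep hcob hbd
      have hlim2 : limsup (fun k => (∫ z, g z ∂F0) + (1/ε) * W1 (Fk k) F0) atTop
          = (∫ z, g z ∂F0) + (1/ε) * 0 := htend.limsup_eq
      have hfinal : (∫ z, g z ∂F0) ≤ (F0 (D m)).toReal := by
        have h8 : ∫ z, g z ∂F0 ≤ ∫ z, (D m).indicator (fun _ => (1:ℝ)) z ∂F0 := by
          apply integral_mono (hg_int _) ((integrable_const (1:ℝ)).indicator hDmeas)
          intro z
          by_cases hzD : z ∈ D m
          · rw [Set.indicator_of_mem hzD]; exact hg_le_one z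
          · rw [Set.indicator_of_notMem hzD, hg_zero z hzD]
        have h9 : ∫ z, (D m).indicator (fun _ => (1:ℝ)) z ∂F0 = (F0 (D m)).toReal := by
          rw [integral_indicator_const (1:ℝ) hDmeas]; simp [measureReal_def]
        linarith
      calc limsup (fun k => (Fk k (C k)).toReal) atTop
          ≤ (∫ z, g z ∂F0) + (1/ε) * 0 := hlim1.trans_eq hlim2
        _ = ∫ z, g z ∂F0 := by ring
        _ ≤ (F0 (D m)).toReal := hfinal
    -- intersection of the D m's is inside C0
    have hsub0 : (⋂ m, D m) ⊆ C0 := by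
      intro z hz
      rw [Set.mem_iInter] at hz
      have hw : ∀ m : ℕ, ∃ w ∈ E (εm m), dist z w < 2 * εm m := by
        intro m
        have h1 : Metric.infDist z (E (εm m)) < 2 * εm m :=
          lt_of_le_of_lt (hz m) (by have := hεm_pos m; linarith)
        exact (Metric.infDist_lt_iff (hEne m)).mp h1
      choose w hw1 hw2 using hw
      have hwz : Tendsto w atTop (𝓝 z) := by
        rw [tendsto_iff_dist_tendsto_zero]
        apply squeeze_zero (fun m => dist_nonneg) (fun m => (dist_comm (w m) z ▸ (hw2 m).le))
        have : Tendsto (fun m : ℕ => 2 * εm m) atTop (𝓝 (2 * 0)) := hεm_tendsto.const_mul 2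
        simpa using this
      have hSw : ∀ m, S (x0, a0, w m) ∈
          Set.Icc (fun i => b₁ i - εm m) (fun i => b₂ i + εm m) := fun m => (hw1 m).1
      have hWw : ∀ m, W (w m) ≤ ρ + εm m := fun m => (hw1 m).2
      constructor
      · rw [Set.mem_Icc]
        have hSc : ∀ i : Fin n, Tendsto (fun m => S (x0, a0, w m) i) atTop
            (𝓝 (S (x0, a0, z) i)) := fun i =>
          (((continuous_apply i).comp hScont).tendsto z).comp hwz
        constructor <;> intro i
        · have hlo : Tendsto (fun m => b₁ i - εm m) atTop (𝓝 (b₁ i - 0)) :=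
            tendsto_const_nhds.sub hεm_tendsto
          have := le_of_tendsto_of_tendsto' hlo (hSc i)
            (fun m => by have := (Set.mem_Icc.mp (hSw m)).1 i; simpa using this)
          simpa using this
        · have hhi : Tendsto (fun m => b₂ i + εm m) atTop (𝓝 (b₂ i + 0)) :=
            tendsto_const_nhds.add hεm_tendsto
          have := le_of_tendsto_of_tendsto' (hSc i) hhi
            (fun m => by have := (Set.mem_Icc.mp (hSw m)).2 i; simpa using this)
          simpa using this
      · show W z ≤ ρ
        have hWc : Tendsto (fun m => W (w m)) atTop (𝓝 (W z)) :=
          (hWlip.continuous.tendsto z).comp hwz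
        have hrc : Tendsto (fun m => ρ + εm m) atTop (𝓝 (ρ + 0)) :=
          tendsto_const_nhds.add hεm_tendsto
        have := le_of_tendsto_of_tendsto' hWc hrc hWw
        simpa using this
    -- conclude
    have hiInt : Tendsto (fun m => (F0 (D m)).toReal) atTop
        (𝓝 ((F0 (⋂ m, D m)).toReal)) := by
      have h1 := tendsto_measure_iInter_atTop (μ := F0)
        (fun m => (hDclosed m).measurableSet.nullMeasurableSet) hDanti
        ⟨0, measure_ne_top _ _⟩
      exact (ENNReal.tendsto_toReal (measure_ne_top _ _)).comp h1
    have hlimfin : limsup (fun k => (Fk k (C k)).toReal) atTop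
        ≤ (F0 (⋂ m, D m)).toReal := ge_of_tendsto' hiInt claimM
    exact hlimfin.trans (ENNReal.toReal_mono (measure_ne_top _ _) (measure_mono hsub0))
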